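/- Let f: ℕ₀ → ℂ be such that its Z-transform f̃(z) = ∑_{n=0}^∞ f(n) z^n converges for |z| < 1, and let T(t)f(n) = ∑_{j=0}^n C(n,j) e^{-tj}(1-e^{-t})^{n-j} f(j). Then for every t > 0 and |z| < 1, ∑_{n=0}^∞ T(t)f(n) z^n = (1/(1 - z(1-e^{-t}))) · f̃(e^{-t}z/(1 - z(1-e^{-t}))). -/

import Mathlib

/-- The one-parameter family `T(t)` on sequences. -/
noncomputable def Tsem (t : ℝ) (f : ℕ → ℂ) (n : ℕ) : ℂ :=
  ∑ j ∈ Finset.range (n + 1),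
    (n.choose j : ℂ) * (Real.exp (-t)) ^ j * (1 - (Real.exp (-t) : ℂ)) ^ (n - j) * f j

/-- Z-transform of the semigroup `T(t)`. -/
theorem stmt14 (f : ℕ → ℂ) (hf : ∀ z : ℂ, ‖z‖ < 1 → Summable (fun n : ℕ => f n * z ^ n))
    (t : ℝ) (ht : 0 < t) (z : ℂ) (hz : ‖z‖ < 1) :
    HasSum (fun n : ℕ => Tsem t f n * z ^ n)
      ((1 / (1 - z * (1 - Real.exp (-t)))) *
        ∑' n : ℕ, f n * ((Real.exp (-t) : ℂ) * z / (1 - z * (1 - Real.exp (-t)))) ^ n) := by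
  have hz' : ‖z‖ < 1 := hz
  set a : ℂ := (Real.exp (-t) : ℂ) with ha
  set b : ℂ := 1 - a with hb
  have hea0 : (0:ℝ) < Real.exp (-t) := Real.exp_pos _
  have hea1 : Real.exp (-t) < 1 := by
    rw [Real.exp_lt_one_iff]; linarith
  have hna : ‖a‖ = Real.exp (-t) := by
    rw [ha, Complex.norm_real, Real.norm_eq_abs, abs_of_pos hea0]
  have hnb : ‖b‖ = 1 - Real.exp (-t) := by
    have : b = ((1 - Real.exp (-t) : ℝ) : ℂ) := by push_cast [hb, ha]; ring
    rw [this, Complex.norm_real, Real.norm_eq_abs, abs_of_nonneg (by linarith)]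
  have hbz : ‖z * b‖ < 1 := by
    rw [norm_mul, hnb]
    nlinarith [norm_nonneg z]
  have hbz0 : (0:ℝ) ≤ ‖z * b‖ := norm_nonneg _
  set D : ℂ := 1 - z * b with hD
  have hDpos : 0 < ‖D‖ := by
    have h1 : ‖(1:ℂ)‖ - ‖z * b‖ ≤ ‖D‖ := by
      simpa [hD] using norm_sub_norm_le (1:ℂ) (z * b)
    simp only [norm_one] at h1
    linarith
  have hDne : D ≠ 0 := by
    intro h; rw [h] at hDpos; simp at hDpos
  have hkey : ‖a * z‖ < ‖D‖ := by
    have h1 : ‖(1:ℂ)‖ - ‖z * b‖ ≤ ‖D‖ := by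
      simpa [hD] using norm_sub_norm_le (1:ℂ) (z * b)
    simp only [norm_one] at h1
    rw [norm_mul, hna]
    rw [norm_mul, hnb] at h1
    nlinarith [norm_nonneg z]
  set w : ℂ := a * z / D with hw
  have hw1 : ‖w‖ < 1 := by
    rw [hw, norm_div, div_lt_one hDpos]; exact hkey
  -- summability of norms against any geometric ratio
  have key : ∀ r : ℝ, 0 ≤ r → r < 1 → Summable (fun j : ℕ => ‖f j‖ * r ^ j) := by
    intro r hr0 hr1
    set r' : ℝ := (r + 1) / 2 with hr'
    have hr'0 : 0 < r' := by rw [hr']; linarith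
    have hrr' : r < r' := by rw [hr']; linarith
    have hr'1 : r' < 1 := by rw [hr']; linarith
    have hs : Summable (fun n : ℕ => f n * (r' : ℂ) ^ n) := by
      apply hf
      rw [Complex.norm_real, Real.norm_eq_abs, abs_of_pos hr'0]; exact hr'1
    have htend : Filter.Tendsto (fun n : ℕ => ‖f n‖ * r' ^ n) Filter.atTop (nhds 0) := by
      have := hs.tendsto_atTop_zero.norm
      simp only [norm_zero] at this
      refine this.congr fun n => ?_
      rw [norm_mul, norm_pow, Complex.norm_real, Real.norm_eq_abs, abs_of_pos hr'0]
    obtain ⟨C, hC⟩ := htend.bddAbove_range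
    have hCmem : ∀ n : ℕ, ‖f n‖ * r' ^ n ≤ C := fun n => hC ⟨n, rfl⟩
    have hgeo : Summable (fun n : ℕ => C * (r / r') ^ n) := by
      apply Summable.mul_left
      apply summable_geometric_of_lt_one (by positivity)
      rw [div_lt_one hr'0]; exact hrr'
    apply Summable.of_nonneg_of_le (fun n => by positivity) _ hgeo
    intro n
    have hzz : r ^ n = r' ^ n * (r / r') ^ n := by
      rw [← mul_pow, mul_comm r' (r / r'), div_mul_cancel₀ r (ne_of_gt hr'0)]
    calc ‖f n‖ * r ^ n = (‖f n‖ * r' ^ n) * (r / r') ^ n := by rw [hzz]; ring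
      _ ≤ C * (r / r') ^ n := mul_le_mul_of_nonneg_right (hCmem n) (by positivity)
  -- the double-indexed family
  set F : ℕ × ℕ → ℂ := fun p => ((p.1 + p.2).choose p.1 : ℂ) * f p.1 * (a * z) ^ p.1 * (z * b) ^ p.2
    with hF
  have hinner : ∀ j : ℕ, HasSum (fun k => F (j, k)) (f j * (a * z) ^ j * (1 / D ^ (j + 1))) := by
    intro j
    have h := (hasSum_choose_mul_geometric_of_norm_lt_one (𝕜 := ℂ) j hbz).mul_left
      (f j * (a * z) ^ j)
    rw [hD]
    refine h.congr_fun fun k => ?_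
    simp only [hF]
    rw [Nat.add_comm j k]
    ring
  -- norm summability
  have hFnorm : ∀ p : ℕ × ℕ,
      ‖F p‖ = ((p.1 + p.2).choose p.1 : ℝ) * ‖f p.1‖ * ‖a * z‖ ^ p.1 * ‖z * b‖ ^ p.2 := by
    intro p
    simp [hF, norm_mul, norm_pow, abs_of_nonneg]
  set ρ : ℝ := ‖a * z‖ / (1 - ‖z * b‖) with hρ
  have hzb1 : ‖z * b‖ < 1 := hbz
  have hden : (0:ℝ) < 1 - ‖z * b‖ := by linarith
  have hρ0 : 0 ≤ ρ := by positivity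
  have hρ1 : ρ < 1 := by
    rw [hρ, div_lt_one hden, norm_mul, norm_mul, hna, hnb]
    nlinarith [norm_nonneg z]
  have hNsum : Summable (fun p : ℕ × ℕ => ‖F p‖) := by
    rw [summable_prod_of_nonneg (fun p => norm_nonneg _)]
    have hin : ∀ j : ℕ, HasSum (fun k => ‖F (j, k)‖)
        (‖f j‖ * ‖a * z‖ ^ j * (1 / (1 - ‖z * b‖) ^ (j + 1))) := by
      intro j
      have h := (hasSum_choose_mul_geometric_of_norm_lt_one (𝕜 := ℝ) j
        (by rwa [Real.norm_eq_abs, abs_of_nonneg hbz0])).mul_left (‖f j‖ * ‖a * z‖ ^ j)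
      refine h.congr_fun fun k => ?_
      rw [hFnorm, Nat.add_comm j k]
      ring
    constructor
    · exact fun j => (hin j).summable
    · have heq : ∀ j : ℕ, (∑' k, ‖F (j, k)‖)
          = (1 / (1 - ‖z * b‖)) * (‖f j‖ * ρ ^ j) := by
        intro j
        rw [(hin j).tsum_eq, hρ, div_pow]
        rw [pow_succ]
        field_simp
      rw [show (fun j => ∑' k, ‖F (j, k)‖) = fun j => (1 / (1 - ‖z * b‖)) * (‖f j‖ * ρ ^ j)
        from funext heq]
      exact (key ρ hρ0 hρ1).mul_left _
  have hFsum : Summable F := by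
    apply Summable.of_norm hNsum
  -- total sum computation
  have hwsum : Summable (fun n : ℕ => f n * w ^ n) := hf w hw1
  have htotal : HasSum F ((1 / D) * ∑' n : ℕ, f n * w ^ n) := by
    have h1 : ∑' p, F p = ∑' j, ∑' k, F (j, k) := Summable.tsum_prod' hFsum fun j => (hinner j).summable
    have h2 : ∀ j, ∑' k, F (j, k) = (1 / D) * (f j * w ^ j) := by
      intro j
      have hsplit : (1:ℂ)/D^(j+1) = 1/D * (1/D)^j := by
        rw [one_div_pow, div_mul_div_comm, one_mul, ← pow_succ']
      rw [(hinner j).tsum_eq, hsplit, hw]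
      simp only [div_pow, one_pow]
      ring
    have h3 : ∑' p, F p = (1 / D) * ∑' n : ℕ, f n * w ^ n := by
      rw [h1]
      simp_rw [h2]
      rw [tsum_mul_left]
    rw [← h3]
    exact hFsum.hasSum
  -- convert to antidiagonal sums
  have hsig : HasSum (fun n : ℕ => ∑ p ∈ Finset.HasAntidiagonal.antidiagonal n, F p)
      ((1 / D) * ∑' n : ℕ, f n * w ^ n) := by
    have h1 : HasSum (F ∘ Finset.HasAntidiagonal.sigmaAntidiagonalEquivProd)
        ((1 / D) * ∑' n : ℕ, f n * w ^ n) :=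
      (Equiv.hasSum_iff _).2 htotal
    have h2 := h1.sigma (fun n => hasSum_fintype fun c : Finset.HasAntidiagonal.antidiagonal n =>
      F (Finset.HasAntidiagonal.sigmaAntidiagonalEquivProd ⟨n, c⟩))
    refine h2.congr_fun fun n => ?_
    rw [← Finset.sum_attach (Finset.HasAntidiagonal.antidiagonal n) (fun p => F p)]
    rfl
  -- identify the antidiagonal sums with Tsem
  have hfinal : ∀ n : ℕ, ∑ p ∈ Finset.HasAntidiagonal.antidiagonal n, F p = Tsem t f n * z ^ n := by
    intro n
    rw [Finset.Nat.sum_antidiagonal_eq_sum_range_succ_mk, Tsem, Finset.sum_mul]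
    refine Finset.sum_congr rfl fun j hj => ?_
    rw [Finset.mem_range] at hj
    have hjn : j ≤ n := Nat.lt_succ_iff.mp hj
    simp only [hF, hb, ha]
    rw [Nat.add_sub_cancel' hjn, mul_pow, mul_pow]
    have hzz : z ^ j * z ^ (n - j) = z ^ n := by rw [← pow_add, Nat.add_sub_cancel' hjn]
    linear_combination ((n.choose j : ℂ) * f j * ((Real.exp (-t) : ℂ)) ^ j *
      (1 - (Real.exp (-t) : ℂ)) ^ (n - j)) * hzz
  -- conclude
  exact hsig.congr_fun fun n => (hfinal n).symm
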